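/- For e ≥ 2, the coefficient of w^{ei} z^i in the formal power series (1+wz)²(1+w^e z)/(1 − (d−2)wz − (e−1)w^e z − (d+e−2)w^{e+1}z²) equals 1 if i = 0 and e(e−1)^{i−1} if i ≥ 1. -/

import Mathlib

open MvPowerSeries

noncomputable section
namespace S19
open Finsupp

abbrev MvPS := MvPowerSeries (Fin 2) ℚ

def pr (a b : ℕ) : Fin 2 →₀ ℕ := Finsupp.single 0 a + Finsupp.single 1 b

@[simp] lemma pr_apply0 (a b : ℕ) : pr a b 0 = a := by
  simp [pr, Finsupp.single_apply]

@[simp] lemma pr_apply1 (a b : ℕ) : pr a b 1 = b := by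
  simp [pr, Finsupp.single_apply]

lemma pr_le {a b a' b' : ℕ} : pr a' b' ≤ pr a b ↔ a' ≤ a ∧ b' ≤ b := by
  rw [Finsupp.le_def]
  constructor
  · intro h; exact ⟨by simpa using h 0, by simpa using h 1⟩
  · rintro ⟨h1, h2⟩ i; fin_cases i <;> simpa

lemma pr_sub (a b a' b' : ℕ) : pr a b - pr a' b' = pr (a - a') (b - b') := by
  ext i; fin_cases i <;> simp [Finsupp.tsub_apply]

lemma pr_inj {a b a' b' : ℕ} : pr a b = pr a' b' ↔ a = a' ∧ b = b' := by
  constructor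
  · intro h
    exact ⟨by simpa using congrArg (fun f => f 0) h, by simpa using congrArg (fun f => f 1) h⟩
  · rintro ⟨rfl, rfl⟩; rfl

lemma mono_eq (a b : ℕ) (c : ℚ) :
    (monomial (pr a b) c : MvPS) = C c * X 0 ^ a * X 1 ^ b := by
  rw [X_pow_eq, X_pow_eq, ← monomial_zero_eq_C_apply, monomial_mul_monomial,
    monomial_mul_monomial, mul_one, mul_one, zero_add, pr]

/-- The denominator. -/
def Q (d e : ℕ) : MvPS :=
  1 - ((d : MvPS) - 2) * X (0 : Fin 2) * X 1 -
    ((e : MvPS) - 1) * X (0 : Fin 2) ^ e * X 1 -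
    ((d : MvPS) + (e : MvPS) - 2) * X (0 : Fin 2) ^ (e + 1) * X 1 ^ 2

/-- The numerator. -/
def N (e : ℕ) : MvPS := (1 + X (0 : Fin 2) * X 1) ^ 2 * (1 + X (0 : Fin 2) ^ e * X 1)

lemma Q_eq (d e : ℕ) :
    Q d e = 1 - monomial (pr 1 1) ((d : ℚ) - 2) - monomial (pr e 1) ((e : ℚ) - 1) -
      monomial (pr (e + 1) 2) ((d : ℚ) + (e : ℚ) - 2) := by
  simp only [Q, mono_eq, map_sub, map_add, map_natCast, map_ofNat, map_one]
  ring

lemma N_eq (e : ℕ) :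
    N e = monomial (pr 0 0) 1 + monomial (pr 1 1) 2 + monomial (pr 2 2) 1 +
      monomial (pr e 1) 1 + monomial (pr (e + 1) 2) 2 + monomial (pr (e + 2) 3) 1 := by
  simp only [N, mono_eq, map_one, map_ofNat]
  ring

lemma constantCoeff_Q (d e : ℕ) (he : 2 ≤ e) : constantCoeff (Q d e) = 1 := by
  have h0 : ∀ a b : ℕ, a ≠ 0 → (0 : Fin 2 →₀ ℕ) ≠ pr a b := by
    intro a b ha h
    exact ha (by simpa using (congrArg (fun f => f 0) h).symm)
  rw [← coeff_zero_eq_constantCoeff_apply, Q_eq, map_sub, map_sub, map_sub, coeff_zero_one,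
    coeff_monomial, coeff_monomial, coeff_monomial,
    if_neg (h0 1 1 one_ne_zero), if_neg (h0 e 1 (by omega)), if_neg (h0 (e+1) 2 (by omega))]
  ring

/-- The key coefficient recurrence, valid for any power series `F`. -/
lemma coeff_Q_mul (d e : ℕ) (F : MvPS) (a b : ℕ) :
    MvPowerSeries.coeff (pr a b) (Q d e * F) =
      MvPowerSeries.coeff (pr a b) F -
      (if 1 ≤ a ∧ 1 ≤ b then ((d : ℚ) - 2) * MvPowerSeries.coeff (pr (a-1) (b-1)) F else 0) -
      (if e ≤ a ∧ 1 ≤ b then ((e : ℚ) - 1) * MvPowerSeries.coeff (pr (a-e) (b-1)) F else 0) -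
      (if e + 1 ≤ a ∧ 2 ≤ b then ((d : ℚ) + (e : ℚ) - 2) *
        MvPowerSeries.coeff (pr (a-e-1) (b-2)) F else 0) := by
  rw [Q_eq, sub_mul, sub_mul, sub_mul, one_mul, map_sub, map_sub, map_sub,
    coeff_monomial_mul, coeff_monomial_mul, coeff_monomial_mul, pr_sub, pr_sub, pr_sub]
  simp only [pr_le, Nat.sub_sub]

lemma QF_eq (d e : ℕ) (he : 2 ≤ e) : Q d e * (N e * (Q d e)⁻¹) = N e := by
  rw [mul_comm (N e), ← mul_assoc, MvPowerSeries.mul_inv_cancel _ (by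
    rw [constantCoeff_Q d e he]; exact one_ne_zero), one_mul]

lemma coeff_N_cone (e : ℕ) (he : 2 ≤ e) (a b : ℕ) (h : e * b < a) :
    MvPowerSeries.coeff (pr a b) (N e) = 0 := by
  have h1 : 1 ≤ e * 1 := by nlinarith
  have h2 : 2 ≤ e * 2 := by nlinarith
  have h3 : e + 2 ≤ e * 3 := by nlinarith
  rw [N_eq]
  simp only [map_add, coeff_monomial, pr_inj]
  repeat rw [if_neg (by rintro ⟨rfl, rfl⟩; omega)]
  ring

lemma coeff_N_strand (e : ℕ) (he : 2 ≤ e) (i : ℕ) :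
    MvPowerSeries.coeff (pr (e * i) i) (N e) =
      if i = 0 then 1 else if i = 1 then 1 else 0 := by
  rw [N_eq]
  simp only [map_add, coeff_monomial, pr_inj]
  rw [if_neg (by rintro ⟨h1, rfl⟩; omega : ¬(e * i = 1 ∧ i = 1)),
    if_neg (by rintro ⟨h1, rfl⟩; omega : ¬(e * i = 2 ∧ i = 2)),
    if_neg (by rintro ⟨h1, rfl⟩; omega : ¬(e * i = e + 1 ∧ i = 2)),
    if_neg (by rintro ⟨h1, rfl⟩; omega : ¬(e * i = e + 2 ∧ i = 3))]
  rcases Nat.eq_zero_or_pos i with rfl | hi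
  · norm_num
  rcases eq_or_ne i 1 with rfl | hi1
  · rw [if_neg (by rintro ⟨h1, h2⟩; omega), if_pos ⟨mul_one e, rfl⟩]
    norm_num
  · rw [if_neg (by rintro ⟨h1, rfl⟩; omega : ¬(e * i = 0 ∧ i = 0)),
      if_neg (by rintro ⟨h1, rfl⟩; omega : ¬(e * i = e ∧ i = 1)),
      if_neg hi.ne', if_neg hi1]
    norm_num

lemma coeff_F_cone (d e : ℕ) (he : 2 ≤ e) :
    ∀ b a : ℕ, e * b < a →
      MvPowerSeries.coeff (pr a b) (N e * (Q d e)⁻¹) = 0 := by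
  intro b
  induction b using Nat.strong_induction_on with
  | _ b ih =>
    intro a h
    have key := coeff_Q_mul d e (N e * (Q d e)⁻¹) a b
    rw [QF_eq d e he, coeff_N_cone e he a b h] at key
    have sub1 : ∀ k, e * (b - k) = e * b - e * k := fun k => Nat.mul_sub e b k
    have t1 : (if 1 ≤ a ∧ 1 ≤ b then ((d : ℚ) - 2) *
        MvPowerSeries.coeff (pr (a-1) (b-1)) (N e * (Q d e)⁻¹) else 0) = 0 := by
      split
      · next hc =>
        rw [ih (b-1) (by omega) (a-1) (by
          have h1 := sub1 1
          have hb1 : e * 1 ≤ e * b := Nat.mul_le_mul le_rfl hc.2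
          omega), mul_zero]
      · rfl
    have t2 : (if e ≤ a ∧ 1 ≤ b then ((e : ℚ) - 1) *
        MvPowerSeries.coeff (pr (a-e) (b-1)) (N e * (Q d e)⁻¹) else 0) = 0 := by
      split
      · next hc =>
        rw [ih (b-1) (by omega) (a-e) (by
          have h1 := sub1 1
          have hb1 : e * 1 ≤ e * b := Nat.mul_le_mul le_rfl hc.2
          omega), mul_zero]
      · rfl
    have t3 : (if e + 1 ≤ a ∧ 2 ≤ b then ((d : ℚ) + (e : ℚ) - 2) *
        MvPowerSeries.coeff (pr (a-e-1) (b-2)) (N e * (Q d e)⁻¹) else 0) = 0 := by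
      split
      · next hc =>
        rw [ih (b-2) (by omega) (a-e-1) (by
          have h1 := sub1 2
          have hb2 : e * 2 ≤ e * b := Nat.mul_le_mul le_rfl hc.2
          omega), mul_zero]
      · rfl
    rw [t1, t2, t3] at key
    linarith [key]

lemma coeff_F_strand (d e : ℕ) (he : 2 ≤ e) (i : ℕ) :
    MvPowerSeries.coeff (pr (e * i) i) (N e * (Q d e)⁻¹) =
      if i = 0 then 1 else (e : ℚ) * ((e : ℚ) - 1) ^ (i - 1) := by
  induction i with
  | zero =>
    have key := coeff_Q_mul d e (N e * (Q d e)⁻¹) 0 0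
    rw [QF_eq d e he] at key
    have hN := coeff_N_strand e he 0
    rw [mul_zero] at hN
    rw [hN] at key
    rw [mul_zero]
    simpa using key.symm
  | succ i ih =>
    have key := coeff_Q_mul d e (N e * (Q d e)⁻¹) (e * (i+1)) (i+1)
    rw [QF_eq d e he, coeff_N_strand e he (i+1)] at key
    have hmul : e * (i+1) = e * i + e := by ring
    have hii : e * i + e * 1 ≤ e * (i + 1) := by omega
    have t1 : MvPowerSeries.coeff (pr (e * (i+1) - 1) (i+1-1)) (N e * (Q d e)⁻¹) = 0 := by
      apply coeff_F_cone d e he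
      have : i + 1 - 1 = i := rfl
      rw [this]
      omega
    have t2 : pr (e * (i+1) - e) (i+1-1) = pr (e * i) i := by
      rw [pr_inj]; omega
    rw [if_pos (show 1 ≤ e * (i+1) ∧ 1 ≤ i + 1 from ⟨by omega, by omega⟩),
      if_pos (show e ≤ e * (i+1) ∧ 1 ≤ i + 1 from ⟨by omega, by omega⟩),
      t1, mul_zero, t2, ih] at key
    have t3 : (if e + 1 ≤ e * (i+1) ∧ 2 ≤ i + 1 then ((d:ℚ) + (e:ℚ) - 2) *
        MvPowerSeries.coeff (pr (e*(i+1)-e-1) (i+1-2)) (N e * (Q d e)⁻¹) else 0) = 0 := by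
      split
      · next hc =>
        rw [coeff_F_cone d e he (i+1-2) (e*(i+1)-e-1) (by
          have hm : e * (i + 1 - 2) = e * (i + 1) - e * 2 := Nat.mul_sub e (i+1) 2
          have hm2 : e * 2 = e * 1 + e * 1 := by ring
          have hi1 : 1 ≤ i := by omega
          have hii2 : e * 1 ≤ e * i := Nat.mul_le_mul le_rfl hi1
          omega), mul_zero]
      · rfl
    rw [t3] at key
    rcases eq_or_ne i 0 with rfl | hi
    · norm_num at key ⊢
      linarith [key]
    · rw [if_neg hi] at key
      rw [if_neg (by omega : ¬ (i + 1 = 0)), if_neg (by omega : ¬ (i+1 = 1))] at key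
      rw [if_neg (by omega : ¬ (i + 1 = 0)),
        show i + 1 - 1 = (i - 1) + 1 by omega, pow_succ]
      linear_combination -key

end S19
end

/-- The coefficient of `w^{ei} z^i` in
`(1+wz)²(1+w^e z)/(1 − (d−2)wz − (e−1)w^e z − (d+e−2)w^{e+1}z²)` equals
`1` if `i = 0` and `e(e−1)^{i−1}` if `i ≥ 1`.
Here `w = X 0` and `z = X 1` in `ℚ[[w,z]]`. -/
theorem stmt19 (d e : ℕ) (hd : 1 ≤ d) (he : 2 ≤ e) (i : ℕ) :
    MvPowerSeries.coeff (Finsupp.single (0 : Fin 2) (e * i) + Finsupp.single (1 : Fin 2) i)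
      ((1 + X (0 : Fin 2) * X 1) ^ 2 * (1 + X (0 : Fin 2) ^ e * X 1) *
        (1 - ((d : MvPowerSeries (Fin 2) ℚ) - 2) * X (0 : Fin 2) * X 1 -
          ((e : MvPowerSeries (Fin 2) ℚ) - 1) * X (0 : Fin 2) ^ e * X 1 -
          ((d : MvPowerSeries (Fin 2) ℚ) + (e : MvPowerSeries (Fin 2) ℚ) - 2) *
            X (0 : Fin 2) ^ (e + 1) * X 1 ^ 2)⁻¹) =
      if i = 0 then 1 else (e : ℚ) * ((e : ℚ) - 1) ^ (i - 1) := by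
  exact S19.coeff_F_strand d e he i
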